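/- Let G be a connected finite simple graph of order n ≥ 13 with degree sequence d₁ ≤ ⋯ ≤ d_n satisfying the weak Chvátal condition (for all 1 ≤ i < n/2, d_i ≥ i + 1 or d_{n−i} ≥ n − i − 1), having at most one vertex of degree 1, and with m(G,2) > 2. Let L = {v ∈ V(G) : d(v) ≥ (n−1)/2}, and let I be a set of maximum cardinality among all closures ⟨A⟩ of two-element sets A ⊆ V(G) under 2-neighbor bootstrap percolation that have nonempty intersection with L. Then |I| ≤ (n+1)/2. -/

import Mathlib

open Finset
open scoped Classical

/-- One step of the `r`-neighbor bootstrap percolation process: all currently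
active vertices stay active, and every vertex with at least `r` active
neighbors becomes active. -/
noncomputable def bootStep {V : Type*} [Fintype V] (G : SimpleGraph V) (r : ℕ)
    (A : Finset V) : Finset V :=
  A ∪ Finset.univ.filter (fun v => r ≤ (G.neighborFinset v ∩ A).card)

/-- The closure of `A` under `r`-neighbor bootstrap percolation, i.e. `⋃ₜ Aₜ`.
Since the process is monotone on a finite vertex set, iterating `|V|` times
reaches the fixed point. -/
noncomputable def bootClosure {V : Type*} [Fintype V] (G : SimpleGraph V) (r : ℕ)
    (A : Finset V) : Finset V :=
  (bootStep G r)^[Fintype.card V] A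

/-- `G` `r`-percolates from the initially active set `A`. -/
def Percolates {V : Type*} [Fintype V] (G : SimpleGraph V) (r : ℕ)
    (A : Finset V) : Prop :=
  ∃ t : ℕ, (bootStep G r)^[t] A = Finset.univ

/-- `m(G, r)`: the minimum size of an `r`-contagious set in `G`. -/
noncomputable def minContagious {V : Type*} [Fintype V] (G : SimpleGraph V) (r : ℕ) : ℕ :=
  sInf {k : ℕ | ∃ A : Finset V, A.card = k ∧ Percolates G r A}

set_option linter.unusedSectionVars false

section helpers

variable {V : Type*} [Fintype V] (G : SimpleGraph V) (r : ℕ) (A : Finset V)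

lemma subset_bootStep : A ⊆ bootStep G r A := Finset.subset_union_left

lemma iter_subset_succ (t : ℕ) :
    (bootStep G r)^[t] A ⊆ (bootStep G r)^[t+1] A := by
  rw [Function.iterate_succ_apply']
  exact subset_bootStep G r _

lemma subset_bootIter (t : ℕ) : A ⊆ (bootStep G r)^[t] A := by
  induction t with
  | zero => simp
  | succ t ih => exact ih.trans (iter_subset_succ G r A t)

lemma bootClosure_fixed : bootStep G r (bootClosure G r A) = bootClosure G r A := by
  set f := bootStep G r with hf
  set N := Fintype.card V with hN
  have haux : ∃ t, t ≤ N ∧ f^[t+1] A = f^[t] A := by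
    by_contra h
    push_neg at h
    have key : ∀ t, t ≤ N + 1 → t ≤ (f^[t] A).card := by
      intro t
      induction t with
      | zero => exact fun _ => Nat.zero_le _
      | succ t ih =>
        intro ht
        have h1 := ih (by omega)
        have hne := h t (by omega)
        have hlt : (f^[t] A).card < (f^[t+1] A).card :=
          Finset.card_lt_card (Finset.ssubset_iff_subset_ne.mpr
            ⟨iter_subset_succ G r A t, fun hh => hne hh.symm⟩)
        omega
    have h1 := key (N+1) le_rfl
    have h2 : (f^[N+1] A).card ≤ N := by
      have := Finset.card_le_univ (f^[N+1] A)
      simpa [Finset.card_univ] using this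
    omega
  obtain ⟨t, htN, hfix⟩ := haux
  have hstab : ∀ s, f^[t+s] A = f^[t] A := by
    intro s
    induction s with
    | zero => rfl
    | succ s ih =>
      rw [show t+(s+1) = (t+s)+1 from rfl, Function.iterate_succ_apply', ih]
      exact (Function.iterate_succ_apply' f t A).symm.trans hfix
  show f (f^[N] A) = f^[N] A
  have h1 : f^[N] A = f^[t] A := by
    conv_lhs => rw [show N = t + (N - t) by omega]
    exact hstab _
  rw [h1]
  exact (Function.iterate_succ_apply' f t A).symm.trans hfix

lemma subset_bootClosure : A ⊆ bootClosure G r A := subset_bootIter G r A _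

lemma mem_bootClosure_of {y : V}
    (h : r ≤ (G.neighborFinset y ∩ bootClosure G r A).card) :
    y ∈ bootClosure G r A := by
  rw [← bootClosure_fixed G r A]
  exact Finset.mem_union_right _ (Finset.mem_filter.mpr ⟨Finset.mem_univ _, h⟩)

lemma exists_crossing_walk {S : Finset V} :
    ∀ {a b : V}, G.Walk a b → a ∈ S → b ∉ S →
      ∃ w u, w ∈ S ∧ u ∉ S ∧ G.Adj w u := by
  intro a b p
  induction p with
  | nil => exact fun h h' => absurd h h'
  | @cons x y z h p ih =>
    intro ha hb
    by_cases hy : y ∈ S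
    · exact ih hy hb
    · exact ⟨x, y, ha, hy, h⟩

lemma exists_crossing (hconn : G.Connected) (S : Finset V)
    (h1 : S.Nonempty) (h2 : S ≠ univ) :
    ∃ w u, w ∈ S ∧ u ∉ S ∧ G.Adj w u := by
  obtain ⟨x, hx⟩ := h1
  obtain ⟨y, hy⟩ : ∃ y, y ∉ S := by
    by_contra h
    push_neg at h
    exact h2 (Finset.eq_univ_iff_forall.mpr h)
  obtain ⟨p⟩ := hconn.preconnected x y
  exact exists_crossing_walk G p hx hy

lemma exists_adj_of_conn (hconn : G.Connected) (h : 1 < Fintype.card V) (v : V) :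
    ∃ z, G.Adj v z := by
  obtain ⟨y, hy⟩ := Fintype.exists_ne_of_one_lt_card h v
  obtain ⟨p⟩ := hconn.preconnected v y
  cases p with
  | nil => exact absurd rfl hy
  | cons h _ => exact ⟨_, h⟩

end helpers

theorem stmt12 {V : Type*} [Fintype V] (G : SimpleGraph V)
    (hconn : G.Connected)
    (n : ℕ) (hcard : Fintype.card V = n) (hn : 13 ≤ n)
    (e : Fin n ≃ V)
    (hmono : ∀ i j : Fin n, i ≤ j → G.degree (e i) ≤ G.degree (e j))
    (hchv : ∀ i : ℕ, ∀ h1 : 1 ≤ i, ∀ h2 : 2 * i < n,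
      i + 1 ≤ G.degree (e ⟨i - 1, by omega⟩) ∨
      n - i - 1 ≤ G.degree (e ⟨n - i - 1, by omega⟩))
    (hdeg1 : (Finset.univ.filter (fun v => G.degree v = 1)).card ≤ 1)
    (hm : 2 < minContagious G 2)
    (L : Finset V) (hL : L = Finset.univ.filter (fun v => n - 1 ≤ 2 * G.degree v))
    (I : Finset V)
    (hIcl : ∃ A : Finset V, A.card = 2 ∧ I = bootClosure G 2 A)
    (hIL : (I ∩ L).Nonempty)
    (hImax : ∀ A : Finset V, A.card = 2 → (bootClosure G 2 A ∩ L).Nonempty →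
      (bootClosure G 2 A).card ≤ I.card) :
    2 * I.card ≤ n + 1 := by
  by_contra hcon
  push_neg at hcon
  obtain ⟨A0, hA0card, hIdef⟩ := hIcl
  have hIfix : bootStep G 2 I = I := by rw [hIdef]; exact bootClosure_fixed G 2 A0
  have hInotuniv : I ≠ univ := by
    intro h
    have hperc : Percolates G 2 A0 :=
      ⟨Fintype.card V, by
        rw [show (bootStep G 2)^[Fintype.card V] A0 = bootClosure G 2 A0 from rfl, ← hIdef, h]⟩
    have : minContagious G 2 ≤ 2 := Nat.sInf_le ⟨A0, hA0card, hperc⟩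
    omega
  have hIuniv_le : I.card ≤ n := by
    rw [← hcard, ← Finset.card_univ]
    exact Finset.card_le_univ I
  have hIlt : I.card < n := by
    have := Finset.card_lt_card (Finset.ssubset_iff_subset_ne.mpr ⟨Finset.subset_univ I, hInotuniv⟩)
    rwa [Finset.card_univ, hcard] at this
  set k := n - I.card with hkdef
  have hIcard : I.card = n - k := by omega
  have hk1 : 1 ≤ k := by omega
  have hkn : 2 * k + 2 ≤ n := by omega
  set Bf := (univ : Finset V) \ I with hBf
  have hmemBf : ∀ x, x ∈ Bf ↔ x ∉ I := by intro x; simp [hBf]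
  have hBfcard : Bf.card = k := by
    rw [hBf, Finset.card_sdiff_of_subset (Finset.subset_univ I), Finset.card_univ, hcard]
  have hclosed : ∀ y, 2 ≤ (G.neighborFinset y ∩ I).card → y ∈ I := by
    intro y hy
    rw [← hIfix]
    exact Finset.mem_union_right _ (Finset.mem_filter.mpr ⟨Finset.mem_univ _, hy⟩)
  have hB1 : ∀ u, u ∉ I → (G.neighborFinset u ∩ I).card ≤ 1 := by
    intro u hu
    by_contra h
    push_neg at h
    exact hu (hclosed u h)
  have hNB : ∀ v : V, G.neighborFinset v \ I = Bf.filter (G.Adj v) := by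
    intro v
    ext x
    simp only [Finset.mem_sdiff, SimpleGraph.mem_neighborFinset, Finset.mem_filter, hBf,
      Finset.mem_univ, true_and]
    tauto
  have hsplit_v : ∀ v : V,
      (G.neighborFinset v ∩ I).card + (Bf.filter (G.Adj v)).card = G.degree v := by
    intro v
    rw [← hNB v, ← SimpleGraph.card_neighborFinset_eq_degree]
    exact Finset.card_inter_add_card_sdiff _ _
  have hdegB : ∀ u, u ∉ I → G.degree u ≤ k := by
    intro u hu
    have h1 := hB1 u hu
    have h2 : (G.neighborFinset u \ I) ⊆ Bf.erase u := by
      intro x hx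
      rw [Finset.mem_sdiff, SimpleGraph.mem_neighborFinset] at hx
      obtain ⟨hx1, hx2⟩ := hx
      refine Finset.mem_erase.mpr ⟨?_, (hmemBf x).mpr hx2⟩
      intro hxx
      exact G.loopless.irrefl u (hxx ▸ hx1)
    have h3 : (Bf.erase u).card = k - 1 := by
      rw [Finset.card_erase_of_mem ((hmemBf u).mpr hu), hBfcard]
    have h4 := Finset.card_le_card h2
    have h5 : (G.neighborFinset u ∩ I).card + (G.neighborFinset u \ I).card = G.degree u := by
      rw [← SimpleGraph.card_neighborFinset_eq_degree]
      exact Finset.card_inter_add_card_sdiff _ _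
    omega
  -- degree sequence: d_k <= k
  have h2k : 2 * k < n := by omega
  have hd_k' : ∀ (p : k - 1 < n), G.degree (e ⟨k - 1, p⟩) ≤ k := by
    intro p
    set S : Finset (Fin n) := Bf.image e.symm with hS
    have hScard : S.card = k := by
      rw [hS, Finset.card_image_of_injective _ e.symm.injective, hBfcard]
    have hSne : S.Nonempty := by
      rw [← Finset.card_pos, hScard]; omega
    set i := S.max' hSne with hi
    have himem : i ∈ S := S.max'_mem hSne
    have hival : k - 1 ≤ i.val := by
      by_contra h
      push_neg at h
      have hsub : S.image Fin.val ⊆ Finset.range (k - 1) := by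
        intro x hx
        obtain ⟨j, hj, rfl⟩ := Finset.mem_image.mp hx
        have hji : j ≤ i := S.le_max' j hj
        rw [Finset.mem_range]
        have : j.val ≤ i.val := hji
        omega
      have := Finset.card_le_card hsub
      rw [Finset.card_image_of_injective _ Fin.val_injective, hScard, Finset.card_range] at this
      omega
    obtain ⟨b, hb, hbe⟩ := Finset.mem_image.mp himem
    have hei : e i ∈ Bf := by rw [← hbe]; simpa using hb
    have hle := hmono ⟨k - 1, p⟩ i hival
    exact hle.trans (hdegB (e i) ((hmemBf (e i)).mp hei))
  have hhighj : ∀ j : Fin n, n - k - 1 ≤ j.val → n - k - 1 ≤ G.degree (e j) := by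
    rcases hchv k hk1 h2k with h | h
    · exact absurd (h.trans (hd_k' _)) (by omega)
    · intro j hj
      exact h.trans (hmono _ j hj)
  -- the set H of k+1 high-degree vertices
  set H : Finset V :=
    (univ : Finset (Fin (k + 1))).image
      (fun t => e ⟨n - k - 1 + t.val, by have := t.isLt; omega⟩) with hH
  have hHcard : H.card = k + 1 := by
    rw [hH, Finset.card_image_of_injective, Finset.card_univ, Fintype.card_fin]
    intro t1 t2 h12
    have h13 := e.injective h12
    have h14 : n - k - 1 + t1.val = n - k - 1 + t2.val := congrArg Fin.val h13
    exact Fin.ext (by omega)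
  have hHdeg : ∀ v ∈ H, n - k - 1 ≤ G.degree v := by
    intro v hv
    rw [hH] at hv
    obtain ⟨t, _, rfl⟩ := Finset.mem_image.mp hv
    exact hhighj _ (by simp)
  have hHI : ∀ v ∈ H, v ∈ I := by
    intro v hv
    by_contra h
    have h1 := hdegB v h
    have h2 := hHdeg v hv
    omega
  have hHL : ∀ v ∈ H, v ∈ L := by
    intro v hv
    rw [hL, Finset.mem_filter]
    exact ⟨Finset.mem_univ _, by have := hHdeg v hv; omega⟩
  -- double counting
  have hdc : ∑ v ∈ H, (Bf.filter (G.Adj v)).card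
      = ∑ b ∈ Bf, (H.filter (fun v => G.Adj v b)).card := by
    simp only [Finset.card_filter]
    exact Finset.sum_comm
  have htb_le : ∀ b ∈ Bf, (H.filter (fun v => G.Adj v b)).card ≤ (G.neighborFinset b ∩ I).card := by
    intro b _
    apply Finset.card_le_card
    intro v hv
    rw [Finset.mem_filter] at hv
    exact Finset.mem_inter.mpr ⟨(G.mem_neighborFinset _ _).mpr hv.2.symm, hHI v hv.1⟩
  have hsumH : ∑ v ∈ H, (Bf.filter (G.Adj v)).card ≤ k := by
    rw [hdc]
    calc ∑ b ∈ Bf, (H.filter (fun v => G.Adj v b)).card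
        ≤ ∑ _b ∈ Bf, 1 := by
          apply Finset.sum_le_sum
          intro b hb
          exact (htb_le b hb).trans (hB1 b ((hmemBf b).mp hb))
      _ = k := by rw [Finset.sum_const, smul_eq_mul, mul_one, hBfcard]
  -- choose v0
  have hv0ex : ∃ v0 ∈ H, (Bf.filter (G.Adj v0)).card = 0 := by
    by_contra h
    push_neg at h
    have h1 : ∀ v ∈ H, 1 ≤ (Bf.filter (G.Adj v)).card :=
      fun v hv => Nat.one_le_iff_ne_zero.mpr (h v hv)
    have h2 := Finset.card_nsmul_le_sum H _ 1 h1
    rw [hHcard, smul_eq_mul, mul_one] at h2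
    omega
  obtain ⟨v0, hv0H, hv0s⟩ := hv0ex
  have hv0I : v0 ∈ I := hHI v0 hv0H
  have hv0L : v0 ∈ L := hHL v0 hv0H
  have hv0filt : Bf.filter (G.Adj v0) = ∅ := Finset.card_eq_zero.mp hv0s
  have hv0nB : ∀ u, u ∉ I → ¬ G.Adj v0 u := by
    intro u hu hadj
    have : u ∈ Bf.filter (G.Adj v0) := Finset.mem_filter.mpr ⟨(hmemBf u).mpr hu, hadj⟩
    rw [hv0filt] at this
    exact absurd this (Finset.notMem_empty u)
  have hNv0 : G.neighborFinset v0 = I \ {v0} := by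
    apply Finset.eq_of_subset_of_card_le
    · intro x hx
      rw [SimpleGraph.mem_neighborFinset] at hx
      refine Finset.mem_sdiff.mpr ⟨?_, ?_⟩
      · by_contra h
        exact hv0nB x h hx
      · simp only [Finset.mem_singleton]
        intro h
        exact G.loopless.irrefl v0 (h ▸ hx)
    · rw [Finset.card_sdiff_of_subset (by simpa using hv0I), Finset.card_singleton,
        SimpleGraph.card_neighborFinset_eq_degree]
      have := hHdeg v0 hv0H
      omega
  have hv0adj : ∀ y ∈ I, y ≠ v0 → G.Adj v0 y := by
    intro y hy hne
    rw [← SimpleGraph.mem_neighborFinset, hNv0]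
    exact Finset.mem_sdiff.mpr ⟨hy, by simpa using hne⟩
  -- crossing edge
  have hIne : I.Nonempty := by rw [← Finset.card_pos]; omega
  obtain ⟨w, u, hwI, huI, hwu⟩ := exists_crossing G hconn I hIne hInotuniv
  have hwv0 : w ≠ v0 := by
    intro h
    exact hv0nB u huI (h ▸ hwu)
  have huv0 : u ≠ v0 := fun h => huI (h ▸ hv0I)
  -- the closure J of {v0, u}
  set A1 : Finset V := {v0, u} with hA1
  have hA1card : A1.card = 2 := Finset.card_pair (Ne.symm huv0)
  set J := bootClosure G 2 A1 with hJ
  have hv0J : v0 ∈ J := subset_bootClosure G 2 A1 (by rw [hA1]; exact Finset.mem_insert_self _ _)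
  have huJ : u ∈ J := subset_bootClosure G 2 A1 (by rw [hA1]; simp)
  have hmemJ : ∀ y, 2 ≤ (G.neighborFinset y ∩ J).card → y ∈ J :=
    fun y hy => mem_bootClosure_of G 2 A1 hy
  have hwJ : w ∈ J := by
    apply hmemJ
    have hsub : ({v0, u} : Finset V) ⊆ G.neighborFinset w ∩ J := by
      intro x hx
      rcases Finset.mem_insert.mp hx with rfl | hx
      · exact Finset.mem_inter.mpr
          ⟨(G.mem_neighborFinset _ _).mpr (hv0adj w hwI hwv0).symm, hv0J⟩
      · rw [Finset.mem_singleton] at hx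
        subst hx
        exact Finset.mem_inter.mpr ⟨(G.mem_neighborFinset _ _).mpr hwu, huJ⟩
    calc 2 = ({v0, u} : Finset V).card := (Finset.card_pair (Ne.symm huv0)).symm
      _ ≤ _ := Finset.card_le_card hsub
  have hJle : J.card ≤ I.card := hImax A1 hA1card ⟨v0, Finset.mem_inter.mpr ⟨hv0J, hv0L⟩⟩
  set D := I \ J with hD
  have hDI : D ⊆ I := Finset.sdiff_subset
  have hIJ : I \ D = I ∩ J := by
    ext z
    rw [hD]
    simp only [Finset.mem_sdiff, Finset.mem_inter]
    tauto
  have hIJcard : (I ∩ J).card = I.card - D.card := by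
    rw [← hIJ, Finset.card_sdiff_of_subset hDI]
  have hv0D : v0 ∉ D := by rw [hD]; simp [hv0J]
  have hwD : w ∉ D := by rw [hD]; simp [hwJ]
  have hDadj : ∀ y ∈ D, ∀ z ∈ J, z ≠ v0 → ¬ G.Adj y z := by
    intro y hy z hz hzv0 hadj
    rw [hD, Finset.mem_sdiff] at hy
    obtain ⟨hyI, hyJ⟩ := hy
    apply hyJ
    apply hmemJ
    have hyv0 : y ≠ v0 := fun h => hyJ (h ▸ hv0J)
    have hsub : ({v0, z} : Finset V) ⊆ G.neighborFinset y ∩ J := by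
      intro x hx
      rcases Finset.mem_insert.mp hx with rfl | hx
      · exact Finset.mem_inter.mpr
          ⟨(G.mem_neighborFinset _ _).mpr (hv0adj y hyI hyv0).symm, hv0J⟩
      · rw [Finset.mem_singleton] at hx
        subst hx
        exact Finset.mem_inter.mpr ⟨(G.mem_neighborFinset _ _).mpr hadj, hz⟩
    calc 2 = ({v0, z} : Finset V).card := (Finset.card_pair (Ne.symm hzv0)).symm
      _ ≤ _ := Finset.card_le_card hsub
  have hJlower : I.card - D.card + 1 ≤ J.card := by
    have hsub : insert u (I ∩ J) ⊆ J := Finset.insert_subset huJ Finset.inter_subset_right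
    have hcard2 : (insert u (I ∩ J)).card = (I ∩ J).card + 1 := by
      rw [Finset.card_insert_of_notMem]
      intro h
      exact huI (Finset.mem_inter.mp h).1
    have := Finset.card_le_card hsub
    omega
  have hDpos : 1 ≤ D.card := by
    have hDcard_le' := Finset.card_le_card hDI
    by_contra h
    push_neg at h
    omega
  have hDcard_le : D.card + 2 ≤ I.card := by
    have hsub : D ⊆ I \ {v0, w} := by
      intro y hy
      refine Finset.mem_sdiff.mpr ⟨hDI hy, ?_⟩
      simp only [Finset.mem_insert, Finset.mem_singleton]
      push_neg
      exact ⟨fun h => hv0D (h ▸ hy), fun h => hwD (h ▸ hy)⟩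
    have h2 : ({v0, w} : Finset V) ⊆ I := by
      intro x hx
      rcases Finset.mem_insert.mp hx with rfl | hx
      · exact hv0I
      · rw [Finset.mem_singleton] at hx
        exact hx ▸ hwI
    have h3 := Finset.card_le_card hsub
    rw [Finset.card_sdiff_of_subset h2, Finset.card_pair hwv0.symm] at h3
    omega
  set d := D.card with hd
  set H1 := H.filter (fun v => v ∈ D) with hH1
  set H2 := H.filter (fun v => v ∉ D ∧ v ≠ v0) with hH2
  set h' := H1.card with hh'
  have hHpart : H = insert v0 (H1 ∪ H2) := by
    ext v
    simp only [Finset.mem_insert, Finset.mem_union, hH1, hH2, Finset.mem_filter]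
    constructor
    · intro hv
      by_cases h1 : v = v0
      · exact Or.inl h1
      · by_cases h2 : v ∈ D
        · exact Or.inr (Or.inl ⟨hv, h2⟩)
        · exact Or.inr (Or.inr ⟨hv, h2, h1⟩)
    · rintro (rfl | ⟨hv, _⟩ | ⟨hv, _⟩)
      · exact hv0H
      · exact hv
      · exact hv
  have hdisj : Disjoint H1 H2 := by
    rw [Finset.disjoint_left]
    intro a ha hb
    rw [hH1, Finset.mem_filter] at ha
    rw [hH2, Finset.mem_filter] at hb
    exact hb.2.1 ha.2
  have hv0nH12 : v0 ∉ H1 ∪ H2 := by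
    rw [Finset.mem_union, hH1, hH2]
    simp only [Finset.mem_filter]
    rintro (⟨_, h⟩ | ⟨_, _, h⟩)
    · exact hv0D h
    · exact h rfl
  have hH2card : H2.card = k - h' ∧ h' ≤ k := by
    have h1 : H.card = (H1 ∪ H2).card + 1 := by
      rw [hHpart, Finset.card_insert_of_notMem hv0nH12]
    rw [Finset.card_union_of_disjoint hdisj, hHcard] at h1
    constructor <;> omega
  have hs_H2 : ∀ v ∈ H2, d ≤ (Bf.filter (G.Adj v)).card := by
    intro v hv
    rw [hH2, Finset.mem_filter] at hv
    obtain ⟨hvH, hvD, hvv0⟩ := hv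
    have hvI := hHI v hvH
    have hvJ : v ∈ J := by
      by_contra h
      exact hvD (by rw [hD]; exact Finset.mem_sdiff.mpr ⟨hvI, h⟩)
    have hsub : D ⊆ I \ insert v (G.neighborFinset v) := by
      intro y hy
      refine Finset.mem_sdiff.mpr ⟨hDI hy, ?_⟩
      rw [Finset.mem_insert]
      push_neg
      constructor
      · intro h
        exact hvD (h ▸ hy)
      · rw [SimpleGraph.mem_neighborFinset]
        intro hadj
        exact hDadj y hy v hvJ hvv0 hadj.symm
    have h1 := Finset.card_le_card hsub
    have h2 : (I \ insert v (G.neighborFinset v)).card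
        + (I ∩ insert v (G.neighborFinset v)).card = I.card :=
      Finset.card_sdiff_add_card_inter _ _
    have h3 : I ∩ insert v (G.neighborFinset v) = insert v (G.neighborFinset v ∩ I) := by
      ext x
      simp only [Finset.mem_inter, Finset.mem_insert]
      constructor
      · rintro ⟨hxI, rfl | hxN⟩
        · exact Or.inl rfl
        · exact Or.inr ⟨hxN, hxI⟩
      · rintro (rfl | ⟨hxN, hxI⟩)
        · exact ⟨hvI, Or.inl rfl⟩
        · exact ⟨hxI, Or.inr hxN⟩
    have h4 : (insert v (G.neighborFinset v ∩ I)).card = (G.neighborFinset v ∩ I).card + 1 := by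
      rw [Finset.card_insert_of_notMem]
      intro h
      exact G.loopless.irrefl v ((G.mem_neighborFinset _ _).mp (Finset.mem_inter.mp h).1)
    rw [h3, h4] at h2
    have h5 := hsplit_v v
    have h6 := hHdeg v hvH
    omega
  have hs_H1 : ∀ v ∈ H1, n - k - 1 - d ≤ (Bf.filter (G.Adj v)).card := by
    intro v hv
    rw [hH1, Finset.mem_filter] at hv
    obtain ⟨hvH, hvD⟩ := hv
    have hsub : G.neighborFinset v ∩ I ⊆ (insert v0 D).erase v := by
      intro z hz
      obtain ⟨hzN, hzI⟩ := Finset.mem_inter.mp hz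
      rw [SimpleGraph.mem_neighborFinset] at hzN
      refine Finset.mem_erase.mpr ⟨fun h => G.loopless.irrefl v (h ▸ hzN), ?_⟩
      rw [Finset.mem_insert]
      by_contra hcon2
      push_neg at hcon2
      obtain ⟨hzv0, hzD⟩ := hcon2
      have hzJ : z ∈ J := by
        by_contra h
        exact hzD (by rw [hD]; exact Finset.mem_sdiff.mpr ⟨hzI, h⟩)
      exact hDadj v hvD z hzJ hzv0 hzN
    have h1 := Finset.card_le_card hsub
    have h2 : ((insert v0 D).erase v).card = d := by
      rw [Finset.card_erase_of_mem (Finset.mem_insert.mpr (Or.inr hvD)),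
        Finset.card_insert_of_notMem hv0D]
      omega
    have h5 := hsplit_v v
    have h6 := hHdeg v hvH
    omega
  have hsum2 : h' * (n - k - 1 - d) + (k - h') * d ≤ k := by
    have hb1 := Finset.card_nsmul_le_sum H1 (fun v => (Bf.filter (G.Adj v)).card) _ hs_H1
    have hb2 := Finset.card_nsmul_le_sum H2 (fun v => (Bf.filter (G.Adj v)).card) _ hs_H2
    have hb3 : ∑ v ∈ H1, (Bf.filter (G.Adj v)).card + ∑ v ∈ H2, (Bf.filter (G.Adj v)).card
        ≤ ∑ v ∈ H, (Bf.filter (G.Adj v)).card := by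
      rw [← Finset.sum_union hdisj]
      apply Finset.sum_le_sum_of_subset
      rw [hHpart]
      exact Finset.subset_insert _ _
    rw [smul_eq_mul, ← hh'] at hb1
    rw [smul_eq_mul, hH2card.1] at hb2
    omega
  have hstar : (∑ v ∈ H, (Bf.filter (G.Adj v)).card = k) →
      ∀ b ∈ Bf, ∃ hb, hb ∈ H ∧ G.neighborFinset b ∩ I = {hb} := by
    intro hsumeq b hb
    have hsum_eq2 : ∑ b' ∈ Bf, (H.filter (fun v => G.Adj v b')).card = k := by
      rw [← hdc, hsumeq]
    have htb1 : ∀ b' ∈ Bf, (H.filter (fun v => G.Adj v b')).card = 1 := by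
      by_contra hcc
      push_neg at hcc
      obtain ⟨b0, hb0, hb0ne⟩ := hcc
      have hlt : ∑ b' ∈ Bf, (H.filter (fun v => G.Adj v b')).card < ∑ _b' ∈ Bf, 1 := by
        apply Finset.sum_lt_sum
        · intro i hi
          exact (htb_le i hi).trans (hB1 i ((hmemBf i).mp hi))
        · refine ⟨b0, hb0, ?_⟩
          have := (htb_le b0 hb0).trans (hB1 b0 ((hmemBf b0).mp hb0))
          omega
      rw [Finset.sum_const, smul_eq_mul, mul_one, hBfcard, hsum_eq2] at hlt
      omega
    have h1 := htb1 b hb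
    have h2 := htb_le b hb
    have h3 := hB1 b ((hmemBf b).mp hb)
    have hNbI : (G.neighborFinset b ∩ I).card = 1 := by omega
    have heq : H.filter (fun v => G.Adj v b) = G.neighborFinset b ∩ I := by
      apply Finset.eq_of_subset_of_card_le
      · intro v hv
        rw [Finset.mem_filter] at hv
        exact Finset.mem_inter.mpr ⟨(G.mem_neighborFinset _ _).mpr hv.2.symm, hHI v hv.1⟩
      · omega
    obtain ⟨hb', hhb'⟩ := Finset.card_eq_one.mp hNbI
    refine ⟨hb', ?_, hhb'⟩
    have : hb' ∈ H.filter (fun v => G.Adj v b) := by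
      rw [heq, hhb']
      exact Finset.mem_singleton_self _
    exact (Finset.mem_filter.mp this).1
  have hx1 : 1 ≤ n - k - 1 - d := by omega
  by_cases hA : h' = 0
  · -- Case A
    have hkd : k * d ≤ k := by
      rw [hA] at hsum2
      simpa using hsum2
    have hd1 : d = 1 := by
      have := Nat.le_of_mul_le_mul_left (by rwa [Nat.mul_one] : k * d ≤ k * 1)
        (show 0 < k by omega)
      omega
    obtain ⟨y, hyD⟩ := Finset.card_eq_one.mp (show D.card = 1 from by omega)
    have hyD' : y ∈ D := hyD ▸ Finset.mem_singleton_self y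
    have hyI : y ∈ I := hDI hyD'
    have hyH : y ∉ H := by
      intro h
      have hmem : y ∈ H1 := by
        rw [hH1, Finset.mem_filter]
        exact ⟨h, hyD'⟩
      have : 1 ≤ H1.card := Finset.card_pos.mpr ⟨y, hmem⟩
      omega
    have hH2' : H2.card = k := by
      have := hH2card.1
      omega
    have hsumeq : ∑ v ∈ H, (Bf.filter (G.Adj v)).card = k := by
      have hb2 := Finset.card_nsmul_le_sum H2 (fun v => (Bf.filter (G.Adj v)).card) _ hs_H2
      have hb3 : ∑ v ∈ H2, (Bf.filter (G.Adj v)).card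
          ≤ ∑ v ∈ H, (Bf.filter (G.Adj v)).card :=
        Finset.sum_le_sum_of_subset (by rw [hH2]; exact Finset.filter_subset _ _)
      rw [hH2', hd1, smul_eq_mul, mul_one] at hb2
      omega
    have hstar' := hstar hsumeq
    have hynB : ∀ b ∈ Bf, ¬ G.Adj b y := by
      intro b hb hadj
      obtain ⟨hb', hbH, heqb⟩ := hstar' b hb
      have hmem : y ∈ G.neighborFinset b ∩ I :=
        Finset.mem_inter.mpr ⟨(G.mem_neighborFinset _ _).mpr hadj, hyI⟩
      rw [heqb, Finset.mem_singleton] at hmem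
      exact hyH (hmem ▸ hbH)
    have hydeg : G.degree y ≤ 1 := by
      have hsub : G.neighborFinset y ⊆ {v0} := by
        intro z hz
        rw [SimpleGraph.mem_neighborFinset] at hz
        rw [Finset.mem_singleton]
        by_contra hzv0
        by_cases hzI : z ∈ I
        · have hzD : z ∉ D := by
            intro h
            rw [hyD, Finset.mem_singleton] at h
            exact G.loopless.irrefl y (h ▸ hz)
          have hzJ : z ∈ J := by
            by_contra h
            exact hzD (by rw [hD]; exact Finset.mem_sdiff.mpr ⟨hzI, h⟩)
          exact hDadj y hyD' z hzJ hzv0 hz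
        · exact hynB z ((hmemBf z).mpr hzI) hz.symm
      have := Finset.card_le_card hsub
      rw [Finset.card_singleton] at this
      rwa [← SimpleGraph.card_neighborFinset_eq_degree]
    by_cases hub : ∃ u', u' ∈ Bf ∧ G.Adj u u'
    · obtain ⟨u', hu'B, huu'⟩ := hub
      obtain ⟨w', hw'H, hw'eq⟩ := hstar' u' hu'B
      have hw'I : w' ∈ I := hHI w' hw'H
      have hw'J : w' ∈ J := by
        by_contra h
        have hmem : w' ∈ D := by rw [hD]; exact Finset.mem_sdiff.mpr ⟨hw'I, h⟩
        rw [hyD, Finset.mem_singleton] at hmem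
        exact hyH (hmem ▸ hw'H)
      have hu'w' : G.Adj u' w' := by
        have hmem : w' ∈ G.neighborFinset u' ∩ I := by
          rw [hw'eq]
          exact Finset.mem_singleton_self _
        exact (G.mem_neighborFinset _ _).mp (Finset.mem_inter.mp hmem).1
      have hu'I : u' ∉ I := (hmemBf u').mp hu'B
      have hu'J : u' ∈ J := by
        apply hmemJ
        have hKne : u ≠ w' := fun h => huI (h ▸ hw'I)
        have hsub : ({u, w'} : Finset V) ⊆ G.neighborFinset u' ∩ J := by
          intro x hx
          rcases Finset.mem_insert.mp hx with rfl | hx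
          · exact Finset.mem_inter.mpr ⟨(G.mem_neighborFinset _ _).mpr huu'.symm, huJ⟩
          · rw [Finset.mem_singleton] at hx
            subst hx
            exact Finset.mem_inter.mpr ⟨(G.mem_neighborFinset _ _).mpr hu'w', hw'J⟩
        calc 2 = ({u, w'} : Finset V).card := (Finset.card_pair hKne).symm
          _ ≤ _ := Finset.card_le_card hsub
      have huu'ne : u ≠ u' := huu'.ne
      have hsubJ : insert u (insert u' (I ∩ J)) ⊆ J := by
        apply Finset.insert_subset huJ
        apply Finset.insert_subset hu'J
        exact Finset.inter_subset_right
      have hc1 : (insert u' (I ∩ J)).card = (I ∩ J).card + 1 := by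
        rw [Finset.card_insert_of_notMem]
        intro h
        exact hu'I (Finset.mem_inter.mp h).1
      have hc2 : (insert u (insert u' (I ∩ J))).card = (I ∩ J).card + 2 := by
        rw [Finset.card_insert_of_notMem, hc1]
        rw [Finset.mem_insert]
        push_neg
        exact ⟨huu'ne, fun h => huI (Finset.mem_inter.mp h).1⟩
      have := Finset.card_le_card hsubJ
      omega
    · push_neg at hub
      have hudeg : G.degree u = 1 := by
        have h1 : Bf.filter (G.Adj u) = ∅ := by
          rw [Finset.filter_eq_empty_iff]
          intro b hb
          exact hub b hb
        have h2 : w ∈ G.neighborFinset u ∩ I :=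
          Finset.mem_inter.mpr ⟨(G.mem_neighborFinset _ _).mpr hwu.symm, hwI⟩
        have h3 := hB1 u huI
        have h4 : 1 ≤ (G.neighborFinset u ∩ I).card := Finset.card_pos.mpr ⟨w, h2⟩
        have h5 := hsplit_v u
        rw [h1, Finset.card_empty] at h5
        omega
      have hydeg1 : G.degree y = 1 := by
        obtain ⟨z, hz⟩ := exists_adj_of_conn G hconn (by rw [hcard]; omega) y
        have : 1 ≤ G.degree y := by
          rw [← SimpleGraph.card_neighborFinset_eq_degree]
          exact Finset.card_pos.mpr ⟨z, (G.mem_neighborFinset _ _).mpr hz⟩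
        omega
      have huy : u ≠ y := fun h => huI (h ▸ hyI)
      have hsub2 : ({u, y} : Finset V) ⊆ univ.filter (fun v => G.degree v = 1) := by
        intro x hx
        rcases Finset.mem_insert.mp hx with rfl | hx
        · exact Finset.mem_filter.mpr ⟨Finset.mem_univ _, hudeg⟩
        · rw [Finset.mem_singleton] at hx
          subst hx
          exact Finset.mem_filter.mpr ⟨Finset.mem_univ _, hydeg1⟩
      have := Finset.card_le_card hsub2
      rw [Finset.card_pair huy] at this
      omega
  · -- Case B : 1 ≤ h'
    by_cases hBk : h' = k
    · have hx2 : k * (n - k - 1 - d) ≤ k := by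
        rw [hBk] at hsum2
        simpa using hsum2
      have hx3 : n - k - 1 - d ≤ 1 :=
        Nat.le_of_mul_le_mul_left (by rwa [Nat.mul_one]) (show 0 < k by omega)
      have hsumeq : ∑ v ∈ H, (Bf.filter (G.Adj v)).card = k := by
        have hb1 := Finset.card_nsmul_le_sum H1 (fun v => (Bf.filter (G.Adj v)).card) _ hs_H1
        have hb3 : ∑ v ∈ H1, (Bf.filter (G.Adj v)).card
            ≤ ∑ v ∈ H, (Bf.filter (G.Adj v)).card :=
          Finset.sum_le_sum_of_subset (by rw [hH1]; exact Finset.filter_subset _ _)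
        have hnkd : n - k - 1 - d = 1 := by omega
        rw [smul_eq_mul, hnkd, mul_one, ← hh', hBk] at hb1
        omega
      obtain ⟨hw', hw'H, hw'eq⟩ := hstar hsumeq u ((hmemBf u).mpr huI)
      have hwmem : w ∈ G.neighborFinset u ∩ I :=
        Finset.mem_inter.mpr ⟨(G.mem_neighborFinset _ _).mpr hwu.symm, hwI⟩
      rw [hw'eq, Finset.mem_singleton] at hwmem
      have hwH : w ∈ H := hwmem ▸ hw'H
      have hH1sub : H1 ⊆ H.erase v0 := by
        intro v hv
        rw [hH1, Finset.mem_filter] at hv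
        exact Finset.mem_erase.mpr ⟨fun h => hv0D (h ▸ hv.2), hv.1⟩
      have hH1eq : H1 = H.erase v0 := by
        apply Finset.eq_of_subset_of_card_le hH1sub
        rw [Finset.card_erase_of_mem hv0H, hHcard]
        omega
      have hwH1 : w ∈ H1 := by
        rw [hH1eq]
        exact Finset.mem_erase.mpr ⟨hwv0, hwH⟩
      rw [hH1, Finset.mem_filter] at hwH1
      exact hwD hwH1.2
    · have hkh' : 1 ≤ k - h' := by
        have := hH2card.2
        omega
      have hf1 : n - k - 1 - d ≤ h' * (n - k - 1 - d) :=
        Nat.le_mul_of_pos_left _ (by omega)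
      have hf2 : d ≤ (k - h') * d :=
        Nat.le_mul_of_pos_left _ (by omega)
      omega
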